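/- Let R_{N=1} = ℂ[D]⊗span{ū_i}_{i∈I} ⊕ E_C be an N=1 SUSY Lie conformal algebra with {Dū_i, ū_i} linearly independent and D E_C = 0, viewed as a non-SUSY Lie conformal algebra R = ℂ[∂]⊗span{u_i, ū_i} ⊕ E_C (u_i := Dū_i) with SUSY generator {ū_i} in the D-direction. Form R̃ = R ⊕ R° via the Theorem-5.4 construction (R° a parity-reversed ghost copy with [x°_λ y] = [x_λ y]°, [x_λ y°] = (-1)^{p(x)}[x_λ y]°, [x°_λ y°] = 0, and D° the corresponding odd derivation). Define D¹ on R̃ by D¹(u_i) = D(u_i), D¹(ū_i) = D(ū_i), D¹(u°_i) = (-D(u_i))°, D¹(ū°_i) = (-D(ū_i))°, and D² := D°. Then the pair ({ū_i, ū°_i}_{i∈I}, D¹) satisfies the supersymmetric extension formulas (SEF1) and (SEF2); in particular [u_i _λ u°_j] = (-1)^{p(u_i)+1}(D¹[u_i _λ ū°_j] + λ[ū_i _λ ū°_j]) and [ū_i _λ u°_j] = (-1)^{p(u_i)+1}([u_i _λ ū°_j] - D¹[ū_i _λ ū°_j]). -/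

import Mathlib

open scoped BigOperators
noncomputable section

namespace VAx

/-- `(-1)^p` for a parity `p` (`true` = odd). -/
def psgn (p : Bool) : ℂ := if p then -1 else 1

/-- `(-1)^{pq}` for parities `p`, `q`. -/
def sgn (p q : Bool) : ℂ := if p && q then -1 else 1

/-- Multiplication by `λ` on a `λ`-expansion `f = ∑ λ^m • f m`. -/
def lam {W : Type*} [AddCommGroup W] (f : ℕ → W) : ℕ → W :=
  fun m => match m with
  | 0 => 0
  | n + 1 => f n

variable (V : Type*) [AddCommGroup V] [Module ℂ V]

/-- Underlying data of a (super) Lie conformal algebra: a `ℤ/2ℤ`-grading (`part false` the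
even part, `part true` the odd part), an even derivation `∂ = der`, and a `λ`-bracket encoded
by its coefficients: `[a_λ b] = ∑_m λ^m • B a b m` (so `B a b m = a_{(m)} b / m!`). -/
structure LCAData where
  part : Bool → Submodule ℂ V
  der : V →ₗ[ℂ] V
  B : V →ₗ[ℂ] V →ₗ[ℂ] (ℕ → V)

/-- Underlying data of a vertex algebra: a Lie conformal algebra datum together with a
vacuum vector and the normally ordered product. -/
structure VAData extends LCAData V where
  one : V
  M : V →ₗ[ℂ] V →ₗ[ℂ] V

variable {V}

namespace LCAData

variable (S : LCAData V)

/-- Coefficientwise form of the Jacobi identity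
`[a_λ [b_γ c]] = [[a_λ b]_{λ+γ} c] + (-1)^{p(a)p(b)} [b_γ [a_λ c]]`
at the coefficient of `λ^m γ^n`. -/
def JacEq (p q : Bool) (a b c : V) (m n : ℕ) : Prop :=
  S.B a (S.B b c n) m =
    (∑ j ∈ Finset.range (m + 1),
      ((Nat.choose (m - j + n) (m - j) : ℂ)) • S.B (S.B a b j) c (m - j + n))
    + sgn p q • S.B b (S.B a c m) n

/-- Coefficientwise form of skew-symmetry `[b_λ a] = (-1)^{p(a)p(b)+1}[a_{-∂-λ} b]`,
given a bound `N` on the support of `[a_λ b]`. -/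
def SkewEq (p q : Bool) (a b : V) (N : ℕ) : Prop :=
  ∀ k, S.B b a k = (- sgn p q) •
    ∑ m ∈ Finset.Icc k N, (((-1 : ℂ)) ^ m * (m.choose k : ℂ)) • ((S.der ^ (m - k)) (S.B a b m))

/-- The axioms of a (super) Lie conformal algebra, expressed coefficientwise on the
`λ`-expansion `[a_λ b] = ∑ λ^m • B a b m`. -/
structure IsLCA : Prop where
  hom_der : ∀ p, ∀ a ∈ S.part p, S.der a ∈ S.part p
  hom_B : ∀ p q a b, a ∈ S.part p → b ∈ S.part q → ∀ m, S.B a b m ∈ S.part (xor p q)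
  sesq1 : ∀ a b, S.B (S.der a) b 0 = 0 ∧ ∀ m, S.B (S.der a) b (m + 1) = - S.B a b m
  sesq2 : ∀ a b, S.B a (S.der b) 0 = S.der (S.B a b 0) ∧
    ∀ m, S.B a (S.der b) (m + 1) = S.der (S.B a b (m + 1)) + S.B a b m
  bfin : ∀ a b, ∃ N, ∀ m, N ≤ m → S.B a b m = 0
  skew : ∀ p q a b N, a ∈ S.part p → b ∈ S.part q →
    (∀ m, N ≤ m → S.B a b m = 0) → S.SkewEq p q a b N
  jacobi : ∀ p q a b c, a ∈ S.part p → b ∈ S.part q → ∀ m n, S.JacEq p q a b c m n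

/-- The supersymmetric extension formulas (SEF1) and (SEF2) for the ordered pair `(x, y)`
(thought of as `(ā, b̄)`), where `p` is the parity of `x` and `D` is the odd endomorphism:
(SEF1) `[Dx_λ Dy] = (-1)^{p(x)+1}(D[Dx_λ y] + λ[x_λ y])`,
(SEF2) `[x_λ Dy] = (-1)^{p(x)+1}([Dx_λ y] - D[x_λ y])`. -/
def SEF (D : Module.End ℂ V) (p : Bool) (x y : V) : Prop :=
  (∀ m, S.B (D x) (D y) m = psgn (!p) • (D (S.B (D x) y m) + lam (S.B x y) m)) ∧
  (∀ m, S.B x (D y) m = psgn (!p) • (S.B (D x) y m - D (S.B x y m)))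

end LCAData

namespace VAData

variable (S : VAData V)

/-- The integral term `∫_0^λ [[a_λ b]_γ c] dγ` of the non-commutative Wick formula, at the
coefficient of `λ^k`, where `f` is the `λ`-expansion of `[a_λ b]`. -/
def wickInt (f : ℕ → V) (c : V) : ℕ → V :=
  fun k => ∑ n ∈ Finset.range k, ((n + 1 : ℂ))⁻¹ • S.B (f (k - 1 - n)) c n

/-- The axioms of a vertex algebra, in the `λ`-bracket formalism, expressed coefficientwise. -/
structure IsVA : Prop where
  isLCA : S.toLCAData.IsLCA
  one_even : S.one ∈ S.part false
  der_one : S.der S.one = 0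
  M_one_left : ∀ a, S.M S.one a = a
  M_one_right : ∀ a, S.M a S.one = a
  B_one_left : ∀ a m, S.B S.one a m = 0
  B_one_right : ∀ a m, S.B a S.one m = 0
  hom_M : ∀ p q a b, a ∈ S.part p → b ∈ S.part q → S.M a b ∈ S.part (xor p q)
  qcomm : ∀ p q a b N, a ∈ S.part p → b ∈ S.part q → (∀ m, N ≤ m → S.B a b m = 0) →
    S.M a b - sgn p q • S.M b a =
      ∑ m ∈ Finset.range (N + 1),
        (((-1 : ℂ) ^ m) * ((m + 1 : ℂ))⁻¹) • ((S.der ^ (m + 1)) (S.B a b m))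
  wick : ∀ p q a b c, a ∈ S.part p → b ∈ S.part q → ∀ k,
    S.B a (S.M b c) k = S.M (S.B a b k) c + sgn p q • S.M b (S.B a c k)
      + S.wickInt (S.B a b) c k

/-- `D` is an odd endomorphism of `V` which is an odd derivation of both the normally ordered
product and the `λ`-bracket. -/
def IsOddDerivation (D : Module.End ℂ V) : Prop :=
  (∀ p, ∀ a ∈ S.part p, D a ∈ S.part (!p)) ∧
  (∀ p a b, a ∈ S.part p → D (S.M a b) = S.M (D a) b + psgn p • S.M a (D b)) ∧
  (∀ p a b m, a ∈ S.part p → D (S.B a b m) = S.B (D a) b m + psgn p • S.B a (D b) m)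

/-- The operator `x ↦ a_{(k)} x` (normalized by `1/k!`). -/
def opAt (a : V) (k : ℕ) : Module.End ℂ V :=
  (LinearMap.proj (R := ℂ) (φ := fun _ : ℕ => V) k).comp (S.B a)

/-- Diagonalizability of an endomorphism. -/
def IsDiag (f : Module.End ℂ V) : Prop :=
  (⨆ μ : ℂ, f.eigenspace μ) = ⊤

/-- `G` is an `N = 1` superconformal vector of `V` with central charge `c`: `G` is odd,
`L := (1/2) G_{(0)} G` is a conformal vector (`L_{(0)} = ∂`, `L_{(1)}` diagonalizable), and the
super-Virasoro relations `[L_λ L] = (∂+2λ)L + (c/12)λ³ |0⟩`, `[L_λ G] = (∂ + (3/2)λ)G`,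
`[G_λ G] = 2L + (c/3)λ² |0⟩` hold. -/
def IsSCV (G : V) (c : ℂ) : Prop :=
  G ∈ S.part true ∧
  S.B G G 1 = 0 ∧
  S.B G G 2 = (c / 3) • S.one ∧
  (∀ m, 3 ≤ m → S.B G G m = 0) ∧
  (S.B ((1 / 2 : ℂ) • S.B G G 0) ((1 / 2 : ℂ) • S.B G G 0) = fun m =>
    match m with
    | 0 => S.der ((1 / 2 : ℂ) • S.B G G 0)
    | 1 => (2 : ℂ) • ((1 / 2 : ℂ) • S.B G G 0)
    | 3 => (c / 12) • S.one
    | _ => 0) ∧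
  (S.B ((1 / 2 : ℂ) • S.B G G 0) G = fun m =>
    match m with
    | 0 => S.der G
    | 1 => (3 / 2 : ℂ) • G
    | _ => 0) ∧
  (∀ x, S.B ((1 / 2 : ℂ) • S.B G G 0) x 0 = S.der x) ∧
  IsDiag (S.opAt ((1 / 2 : ℂ) • S.B G G 0) 1)

/-- The `N = 1` `Λ`-bracket `[a_Λ b] := [Da_λ b] + χ[a_λ b]`, encoded as the pair
`(λ`-expansion of `[Da_λ b]`, `λ`-expansion of `[a_λ b])` (the second component being the
coefficient of `χ`). -/
def SB (D : Module.End ℂ V) (a b : V) : (ℕ → V) × (ℕ → V) :=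
  (S.B (D a) b, S.B a b)

end VAData

end VAx

open VAx VAx.LCAData

/-- (Theorem 6.8.) Let `R_{N=1} = ℂ[D]⊗span{ū_i} ⊕ E_C` be an `N = 1` SUSY Lie
conformal algebra, viewed as a non-SUSY Lie conformal algebra `R` (with graded parts
`Rfull`, spanned by `u_i := Dū_i` and `ū_i`, the latter spanning `Rbar`) with SUSY generator
`{ū_i}` in the `D`-direction. Form `R̃ = R ⊕ R°` via the Theorem-5.4 construction, where the
ghost copy `x ↦ x°` (the parity-reversing map `circ`) satisfies `[x°_λ y] = [x_λ y]°`,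
`[x_λ y°] = (-1)^{p(x)}[x_λ y]°`, `[x°_λ y°] = 0`, with `D°` the corresponding odd
derivation. Define `D¹` by `D¹(x) = D(x)` and `D¹(x°) = (-D(x))°` on `R`, and `D² := D°`.
Then the pair `({ū_i, ū°_i}, D¹)` satisfies the supersymmetric extension formulas (SEF1) and
(SEF2); in particular
`[u_i _λ u°_j] = (-1)^{p(u_i)+1}(D¹[u_i _λ ū°_j] + λ[ū_i _λ ū°_j])` and
`[ū_i _λ u°_j] = (-1)^{p(u_i)+1}([u_i _λ ū°_j] - D¹[ū_i _λ ū°_j])`. -/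
theorem stmt_19 {V : Type*} [AddCommGroup V] [Module ℂ V]
    (S : VAx.LCAData V)
    (hsq1 : ∀ a b, S.B (S.der a) b 0 = 0 ∧ ∀ m, S.B (S.der a) b (m + 1) = - S.B a b m)
    (hsq2 : ∀ a b, S.B a (S.der b) 0 = S.der (S.B a b 0) ∧
      ∀ m, S.B a (S.der b) (m + 1) = S.der (S.B a b (m + 1)) + S.B a b m)
    -- the graded pieces of R (full) and of its SUSY generator part R̄ = span{ū_i}:
    (Rfull Rbar : Bool → Submodule ℂ V)
    (hsub : ∀ p, Rbar p ≤ Rfull p)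
    -- the N = 1 supersymmetry D of R:
    (D : Module.End ℂ V) (hDD : ∀ x, D (D x) = S.der x)
    (hDR : ∀ p x, x ∈ Rfull p → D x ∈ Rfull (!p))
    (hderR : ∀ p x, x ∈ Rfull p → S.der x ∈ Rfull p)
    (hclose : ∀ p q x y, x ∈ Rfull p → y ∈ Rfull q → ∀ m, S.B x y m ∈ Rfull (xor p q))
    (hSEF : ∀ p x, x ∈ Rbar p → ∀ q y, y ∈ Rbar q → S.SEF D p x y)
    -- the ghost copy x ↦ x° and its λ-brackets:
    (circ : V →ₗ[ℂ] V) (hcircder : ∀ x, circ (S.der x) = S.der (circ x))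
    (hc1 : ∀ (p : Bool) (x : V), x ∈ Rfull p → ∀ (q : Bool) (y : V), y ∈ Rfull q →
      ∀ m, S.B (circ x) y m = circ (S.B x y m) ∧
        S.B x (circ y) m = psgn p • circ (S.B x y m) ∧
        S.B (circ x) (circ y) m = 0)
    -- the odd endomorphisms D¹ and D² = D°:
    (D1 D2 : Module.End ℂ V)
    (hD1 : ∀ (p : Bool) (x : V), x ∈ Rfull p → D1 x = D x ∧ D1 (circ x) = - circ (D x))
    (hD2 : ∀ (p : Bool) (x : V), x ∈ Rfull p → D2 (circ x) = x ∧ D2 x = S.der (circ x))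
    (h11 : ∀ x, D1 (D1 x) = S.der x) (h22 : ∀ x, D2 (D2 x) = S.der x)
    (h12 : ∀ x, D1 (D2 x) + D2 (D1 x) = 0) :
    -- the pair ({ū_i, ū°_i}, D¹) satisfies (SEF1) and (SEF2):
    ((∀ (p : Bool) (x : V),
      (x ∈ Rbar p ∨ ∃ (q : Bool) (y : V), y ∈ Rbar q ∧ p = !q ∧ x = circ y) →
      ∀ (p' : Bool) (x' : V),
      (x' ∈ Rbar p' ∨ ∃ (q' : Bool) (y' : V), y' ∈ Rbar q' ∧ p' = !q' ∧ x' = circ y') →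
        S.SEF D1 p x x')) ∧
    -- in particular, the two displayed identities:
    (∀ (p : Bool) (x : V), x ∈ Rbar p → ∀ (q : Bool) (y : V), y ∈ Rbar q →
      (∀ m, S.B (D x) (circ (D y)) m
        = psgn p • (D1 (S.B (D x) (circ y) m) + lam (S.B x (circ y)) m)) ∧
      (∀ m, S.B x (circ (D y)) m
        = psgn p • (S.B (D x) (circ y) m - D1 (S.B x (circ y) m)))) := by
  classical
  -- helper facts about signs and `lam`
  have hpn : ∀ p : Bool, psgn (!p) = -psgn p := by intro p; cases p <;> simp [psgn]
  have hlam : ∀ (f g : ℕ → V) (c : ℂ), (∀ n, f n = c • circ (g n)) →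
      ∀ m, lam f m = c • circ (lam g m) := by
    intro f g c h m
    cases m with
    | zero => simp [lam]
    | succ n => simpa [lam] using h n
  have hlamc : ∀ (f g : ℕ → V), (∀ n, f n = circ (g n)) →
      ∀ m, lam f m = circ (lam g m) := by
    intro f g h m
    cases m with
    | zero => simp [lam]
    | succ n => simpa [lam] using h n
  have hlam0 : ∀ (f : ℕ → V), (∀ n, f n = 0) → ∀ m, lam f m = 0 := by
    intro f h m
    cases m with
    | zero => rfl
    | succ n => exact h n
  have main : ∀ (p : Bool) (x : V),
      (x ∈ Rbar p ∨ ∃ (q : Bool) (y : V), y ∈ Rbar q ∧ p = !q ∧ x = circ y) →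
      ∀ (p' : Bool) (x' : V),
      (x' ∈ Rbar p' ∨ ∃ (q' : Bool) (y' : V), y' ∈ Rbar q' ∧ p' = !q' ∧ x' = circ y') →
        S.SEF D1 p x x' := by
    intro p x hx p' x' hx'
    rcases hx with hx | ⟨q, y, hy, rfl, rfl⟩ <;>
      rcases hx' with hx' | ⟨q', y', hy', rfl, rfl⟩
    · -- both in R
      have hxF := hsub p hx
      have hyF := hsub p' hx'
      have hDx := hDR p x hxF
      have eS := hSEF p x hx p' x' hx'
      constructor
      · intro m
        rw [(hD1 p x hxF).1, (hD1 p' x' hyF).1,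
          (hD1 _ _ (hclose (!p) p' _ _ hDx hyF m)).1]
        exact eS.1 m
      · intro m
        rw [(hD1 p x hxF).1, (hD1 p' x' hyF).1,
          (hD1 _ _ (hclose p p' _ _ hxF hyF m)).1]
        exact eS.2 m
    · -- x ∈ R, x' = circ y'
      have hxF := hsub p hx
      have hyF := hsub q' hy'
      have hDx := hDR p x hxF
      have hDy := hDR q' y' hyF
      have e1 := (hD1 p x hxF).1
      have e2 := (hD1 q' y' hyF).2
      have eS := hSEF p x hx q' y' hy'
      have e5 : ∀ n, S.B x (circ y') n = psgn p • circ (S.B x y' n) :=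
        fun n => (hc1 p x hxF q' y' hyF n).2.1
      constructor
      · intro m
        have e3 := (hc1 (!p) (D x) hDx (!q') (D y') hDy m).2.1
        have e4 := (hc1 (!p) (D x) hDx q' y' hyF m).2.1
        have e6 := (hD1 _ _ (hclose (!p) q' _ _ hDx hyF m)).2
        rw [e1, e2]
        simp only [map_neg, LinearMap.neg_apply, Pi.neg_apply]
        rw [e3, eS.1 m, e4, hlam _ _ _ e5 m]
        simp only [map_smul, map_neg, map_add]
        rw [e6]
        cases p <;>
          simp [psgn, map_add, smul_add, smul_neg, neg_add_rev] <;> abel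
      · intro m
        have e3 := (hc1 p x hxF (!q') (D y') hDy m).2.1
        have e4 := (hc1 (!p) (D x) hDx q' y' hyF m).2.1
        have e7 := (hD1 _ _ (hclose p q' _ _ hxF hyF m)).2
        rw [e1, e2]
        simp only [map_neg, LinearMap.neg_apply, Pi.neg_apply]
        rw [e3, eS.2 m, e4, e5 m]
        simp only [map_smul, map_neg, map_sub]
        rw [e7]
        cases p <;>
          simp [psgn, map_sub, smul_sub, smul_neg, sub_eq_add_neg] <;> abel
    · -- x = circ y, x' ∈ R
      have hyF := hsub q hy
      have hxF := hsub p' hx'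
      have hDy := hDR q y hyF
      have hDx := hDR p' x' hxF
      have e1 := (hD1 q y hyF).2
      have e2 := (hD1 p' x' hxF).1
      have eS := hSEF q y hy p' x' hx'
      have f3 : ∀ n, S.B (circ y) x' n = circ (S.B y x' n) :=
        fun n => (hc1 q y hyF p' x' hxF n).1
      constructor
      · intro m
        have f1 := (hc1 (!q) (D y) hDy (!p') (D x') hDx m).1
        have f2 := (hc1 (!q) (D y) hDy p' x' hxF m).1
        have e6 := (hD1 _ _ (hclose (!q) p' _ _ hDy hxF m)).2
        rw [e1, e2]
        simp only [map_neg, LinearMap.neg_apply, Pi.neg_apply]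
        rw [f1, eS.1 m, f2, hlamc _ _ f3 m]
        simp only [map_smul, map_neg, map_add]
        rw [e6]
        cases q <;>
          simp [psgn, map_add, smul_add, smul_neg, neg_add_rev] <;> abel
      · intro m
        have f4 := (hc1 q y hyF (!p') (D x') hDx m).1
        have f2 := (hc1 (!q) (D y) hDy p' x' hxF m).1
        have e7 := (hD1 _ _ (hclose q p' _ _ hyF hxF m)).2
        rw [e1, e2]
        simp only [map_neg, LinearMap.neg_apply, Pi.neg_apply]
        rw [f4, eS.2 m, f2, f3 m]
        simp only [map_smul, map_neg, map_sub]
        rw [e7]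
        cases q <;>
          simp [psgn, map_sub, smul_sub, smul_neg, sub_eq_add_neg] <;> abel
    · -- x = circ y, x' = circ y'
      have hyF := hsub q hy
      have hyF' := hsub q' hy'
      have hDy := hDR q y hyF
      have hDy' := hDR q' y' hyF'
      have e1 := (hD1 q y hyF).2
      have e2 := (hD1 q' y' hyF').2
      have z1 := (hc1 (!q) (D y) hDy (!q') (D y') hDy')
      have z2 := (hc1 (!q) (D y) hDy q' y' hyF')
      have z3 : ∀ n, S.B (circ y) (circ y') n = 0 :=
        fun n => (hc1 q y hyF q' y' hyF' n).2.2
      have z4 := (hc1 q y hyF (!q') (D y') hDy')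
      constructor
      · intro m
        rw [e1, e2]
        simp only [map_neg, LinearMap.neg_apply, Pi.neg_apply, neg_neg]
        rw [(z1 m).2.2, (z2 m).2.2, hlam0 _ z3 m]
        simp
      · intro m
        rw [e1, e2]
        simp only [map_neg, LinearMap.neg_apply, Pi.neg_apply, neg_neg]
        rw [(z4 m).2.2, (z2 m).2.2, z3 m]
        simp
  refine ⟨main, ?_⟩
  intro p x hx q y hy
  have hS := main p x (Or.inl hx) (!q) (circ y) (Or.inr ⟨q, y, hy, rfl, rfl⟩)
  have hxF := hsub p hx
  have hyF := hsub q hy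
  have e1 := (hD1 p x hxF).1
  have e2 := (hD1 q y hyF).2
  constructor
  · intro m
    have h := hS.1 m
    rw [e1, e2] at h
    simp only [map_neg, LinearMap.neg_apply, Pi.neg_apply] at h
    rw [hpn] at h
    have h' : S.B (D x) (circ (D y)) m
        = psgn p • (D1 (S.B (D x) (circ y) m) + lam (S.B x (circ y)) m) := by
      have := congrArg Neg.neg h
      simpa [neg_smul, smul_add, add_comm] using this
    exact h'
  · intro m
    have h := hS.2 m
    rw [e1, e2] at h
    simp only [map_neg, LinearMap.neg_apply, Pi.neg_apply] at h
    rw [hpn] at h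
    have := congrArg Neg.neg h
    simpa [neg_smul] using this
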